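/- Let (n_k) be positive integers with s_N² = Σ_{k=1}^N n_k², suppose Σ_{k=1}^N e^{-ε s_N/n_k} → 0 for every ε > 0, and let Y_k be i.i.d. copies of Y = log(2(1 - cos(2πU))) with U uniform on [0,1]. Then the triangular array X_{N,k} = n_k Y_k satisfies the Lindeberg condition: for every ε > 0, (1/s_N²) Σ_{k=1}^N n_k² E[Y_k²; |Y_k| ≥ ε s_N/n_k] → 0 as N → ∞. -/

import Mathlib

open Real MeasureTheory Filter

section LindAux
open Set

noncomputable def lindG (u : ℝ) : ℝ :=
  8 + 256 * (u ^ (-(3:ℝ)/4) + (1-u) ^ (-(3:ℝ)/4))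

lemma lindG_nonneg {u : ℝ} (hu : u ∈ Set.Icc (0:ℝ) 1) : 0 ≤ lindG u := by
  have h1 := Real.rpow_nonneg hu.1 (-(3:ℝ)/4)
  have h2 := Real.rpow_nonneg (by linarith [hu.2] : (0:ℝ) ≤ 1 - u) (-(3:ℝ)/4)
  unfold lindG; nlinarith

lemma lindG_integrable : IntegrableOn lindG (Set.Icc (0:ℝ) 1) volume := by
  have h1 : IntervalIntegrable (fun u : ℝ => u ^ (-(3:ℝ)/4)) volume 0 1 :=
    intervalIntegral.intervalIntegrable_rpow' (by norm_num)
  have h2 : IntervalIntegrable (fun u : ℝ => (1-u) ^ (-(3:ℝ)/4)) volume 0 1 := by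
    have := (intervalIntegral.intervalIntegrable_rpow'
      (r := -(3:ℝ)/4) (a := 0) (b := 1) (by norm_num)).comp_sub_left 1
    simpa using this.symm
  have : IntervalIntegrable lindG volume 0 1 := by
    apply IntervalIntegrable.add
    · exact intervalIntegrable_const
    · exact ((h1.add h2).const_mul 256)
  rw [integrableOn_Icc_iff_integrableOn_Ioc]
  exact (intervalIntegrable_iff_integrableOn_Ioc_of_le zero_le_one).mp this
lemma lind_core {u : ℝ} (hu : u ∈ Set.Icc (0:ℝ) 1)
    (hxpos : 0 < 2*(1 - Real.cos (2*π*u))) :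
    (Real.log (2*(1 - Real.cos (2*π*u))))^2 * Real.exp (-(Real.log (2*(1 - Real.cos (2*π*u))))/4)
      ≤ 256 * (u ^ (-(3:ℝ)/4) + (1-u) ^ (-(3:ℝ)/4)) := by
  set x := 2*(1 - Real.cos (2*π*u)) with hxdef
  set L := Real.log x with hLdef
  have hx4 : x ≤ 4 := by
    have := Real.neg_one_le_cos (2*π*u); rw [hxdef]; nlinarith
  -- (a)  L² ≤ 256 x^{-1/8}
  have ha : L^2 ≤ 256 * x ^ (-(1:ℝ)/8) := by
    rcases le_or_gt 1 x with hx1 | hx1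
    · have hL0 : 0 ≤ L := Real.log_nonneg hx1
      have hL4 : L ≤ Real.log 4 := Real.log_le_log hxpos hx4
      have hlog4 : Real.log 4 = 2 * Real.log 2 := by
        rw [show (4:ℝ) = 2^2 by norm_num, Real.log_pow]; push_cast; ring
      have h2 := Real.log_two_lt_d9
      have hx1' : (4:ℝ)⁻¹ ≤ x ^ (-(1:ℝ)/8) := by
        calc (4:ℝ)⁻¹ = (4:ℝ) ^ (-(1:ℝ)) := by rw [Real.rpow_neg_one]
          _ ≤ (4:ℝ) ^ (-(1:ℝ)/8) :=
              Real.rpow_le_rpow_of_exponent_le (by norm_num) (by norm_num)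
          _ ≤ x ^ (-(1:ℝ)/8) := Real.rpow_le_rpow_of_nonpos hxpos hx4 (by norm_num)
      nlinarith
    · set y := x ^ ((-1:ℝ)/16) with hy
      have hypos : 0 < y := Real.rpow_pos_of_pos hxpos _
      have hlogy : Real.log y = (-1/16) * L := Real.log_rpow hxpos _
      have h1 : Real.log y ≤ y - 1 := Real.log_le_sub_one_of_pos hypos
      have hLneg : L < 0 := Real.log_neg hxpos hx1
      have hy2 : y^2 = x ^ (-(1:ℝ)/8) := by
        rw [hy, ← Real.rpow_natCast (x ^ ((-1:ℝ)/16)) 2, ← Real.rpow_mul hxpos.le]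
        norm_num
      nlinarith [sq_nonneg (16*y + L), sq_nonneg (16*y - L)]
  -- e^{-L/4} = x^{-1/4}
  have hb : Real.exp (-L/4) = x ^ (-(1:ℝ)/4) := by
    rw [Real.rpow_def_of_pos hxpos, ← hLdef]; congr 1; ring
  -- (c) x^{-3/8} ≤ u^{-3/4} + (1-u)^{-3/4}
  have hc : x ^ (-(3:ℝ)/8) ≤ u ^ (-(3:ℝ)/4) + (1-u) ^ (-(3:ℝ)/4) := by
    have hsin : x = (2 * Real.sin (π*u))^2 := by
      have h1 := Real.cos_two_mul (π*u)
      have h2 := Real.sin_sq_add_cos_sq (π*u)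
      have h3 : (2:ℝ)*π*u = 2*(π*u) := by ring
      rw [hxdef, h3, h1]; nlinarith
    have hsin_nonneg : 0 ≤ Real.sin (π*u) :=
      Real.sin_nonneg_of_nonneg_of_le_pi (mul_nonneg Real.pi_pos.le hu.1)
        (by nlinarith [Real.pi_pos, hu.2])
    have hsin_pos : 0 < Real.sin (π*u) := by
      rcases eq_or_lt_of_le hsin_nonneg with h | h
      · exfalso; rw [hsin, ← h] at hxpos; norm_num at hxpos
      · exact h
    have hm : (0:ℝ) < 2 * Real.sin (π*u) := by linarith
    have hxpow : x ^ (-(3:ℝ)/8) = (2 * Real.sin (π*u)) ^ (-(3:ℝ)/4) := by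
      rw [hsin, ← Real.rpow_natCast (2 * Real.sin (π*u)) 2, ← Real.rpow_mul hm.le]
      norm_num
    rcases le_or_gt u (1/2) with hu2 | hu2
    · have hu0 : 0 < u := by
        rcases eq_or_lt_of_le hu.1 with h | h
        · exfalso; rw [← h] at hsin_pos; simp at hsin_pos
        · exact h
      have hj := Real.mul_le_sin (x := π*u) (mul_nonneg Real.pi_pos.le hu.1)
        (by nlinarith [Real.pi_pos])
      have hj' : 2*u ≤ Real.sin (π*u) := by
        have hπ := Real.pi_pos
        rw [show 2/π*(π*u) = 2*u * (π/π) by ring, div_self hπ.ne', mul_one] at hj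
        exact hj
      have hle : u ≤ 2 * Real.sin (π*u) := by linarith
      have := Real.rpow_le_rpow_of_nonpos hu0 hle (by norm_num : (-(3:ℝ)/4) ≤ 0)
      have hnn := Real.rpow_nonneg (by linarith [hu.2] : (0:ℝ) ≤ 1-u) (-(3:ℝ)/4)
      rw [hxpow]; linarith
    · have hu1 : u < 1 := by
        rcases eq_or_lt_of_le hu.2 with h | h
        · exfalso; rw [h] at hsin_pos; simp at hsin_pos
        · exact h
      have hflip : Real.sin (π*u) = Real.sin (π*(1-u)) := by
        rw [show π*(1-u) = π - π*u by ring, Real.sin_pi_sub]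
      have hj := Real.mul_le_sin (x := π*(1-u)) (by nlinarith [Real.pi_pos])
        (by nlinarith [Real.pi_pos])
      have hj' : 2*(1-u) ≤ Real.sin (π*u) := by
        have hπ := Real.pi_pos
        rw [show 2/π*(π*(1-u)) = 2*(1-u) * (π/π) by ring, div_self hπ.ne', mul_one] at hj
        rw [hflip]; exact hj
      have hle : 1-u ≤ 2 * Real.sin (π*u) := by linarith
      have := Real.rpow_le_rpow_of_nonpos (by linarith : (0:ℝ) < 1-u) hle
        (by norm_num : (-(3:ℝ)/4) ≤ 0)
      have hnn := Real.rpow_nonneg hu.1 (-(3:ℝ)/4)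
      rw [hxpow]; linarith
  calc L^2 * Real.exp (-L/4) = L^2 * x ^ (-(1:ℝ)/4) := by rw [hb]
    _ ≤ (256 * x ^ (-(1:ℝ)/8)) * x ^ (-(1:ℝ)/4) := by
        have := Real.rpow_nonneg hxpos.le (-(1:ℝ)/4)
        exact mul_le_mul_of_nonneg_right ha this
    _ = 256 * x ^ (-(3:ℝ)/8) := by
        rw [mul_assoc, ← Real.rpow_add hxpos]; norm_num
    _ ≤ 256 * (u ^ (-(3:ℝ)/4) + (1-u) ^ (-(3:ℝ)/4)) := by linarith

lemma lind_ptwise {t u : ℝ} (ht : 0 ≤ t) (hu : u ∈ Set.Icc (0:ℝ) 1) :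
    Set.indicator {v : ℝ | t ≤ |Real.log (2*(1 - Real.cos (2*π*v)))|}
      (fun v => (Real.log (2*(1 - Real.cos (2*π*v))))^2) u ≤ Real.exp (-t/4) * lindG u := by
  have hG := lindG_nonneg hu
  by_cases hmem : u ∈ {v : ℝ | t ≤ |Real.log (2*(1 - Real.cos (2*π*v)))|}
  · rw [Set.indicator_of_mem hmem]
    have hmem' : t ≤ |Real.log (2*(1 - Real.cos (2*π*u)))| := hmem
    set x := 2*(1 - Real.cos (2*π*u)) with hxdef
    set L := Real.log x with hLdef
    have hx0 : 0 ≤ x := by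
      have := Real.cos_le_one (2*π*u); rw [hxdef]; nlinarith
    rcases eq_or_lt_of_le hx0 with h0 | hxpos
    · have hL0 : L = 0 := by rw [hLdef, ← h0, Real.log_zero]
      rw [hL0]
      have := (Real.exp_pos (-t/4)).le
      nlinarith
    · rcases le_or_gt 0 L with hL0 | hLneg
      · have htL : t ≤ L := by rwa [abs_of_nonneg hL0] at hmem'
        have hx4 : x ≤ 4 := by
          have := Real.neg_one_le_cos (2*π*u); rw [hxdef]; nlinarith
        have hL4 : L ≤ Real.log 4 := Real.log_le_log hxpos hx4
        have hlog4 : Real.log 4 = 2 * Real.log 2 := by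
          rw [show (4:ℝ) = 2^2 by norm_num, Real.log_pow]; push_cast; ring
        have h2 := Real.log_two_lt_d9
        have hLle : L ≤ 1.4 := by nlinarith
        have hexpge : (1:ℝ)/2 ≤ Real.exp (-t/4) := by
          calc (1:ℝ)/2 = (-(1:ℝ)/2) + 1 := by norm_num
            _ ≤ Real.exp (-(1:ℝ)/2) := Real.add_one_le_exp _
            _ ≤ Real.exp (-t/4) := Real.exp_le_exp.mpr (by linarith)
        have h8 : 8 ≤ lindG u := by
          have h1 := Real.rpow_nonneg hu.1 (-(3:ℝ)/4)
          have h2 := Real.rpow_nonneg (by linarith [hu.2] : (0:ℝ) ≤ 1 - u) (-(3:ℝ)/4)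
          unfold lindG; nlinarith
        have hprod : (1/2:ℝ)*8 ≤ Real.exp (-t/4) * lindG u :=
          mul_le_mul hexpge h8 (by norm_num) (Real.exp_pos _).le
        nlinarith
      · have htL : L ≤ -t := by
          rw [abs_of_neg hLneg] at hmem'; linarith
        have h1 : (1:ℝ) ≤ Real.exp ((-t - L)/4) := Real.one_le_exp (by linarith)
        have hsplit : Real.exp ((-t-L)/4) = Real.exp (-t/4) * Real.exp (-L/4) := by
          rw [← Real.exp_add]; congr 1; ring
        have hcore := lind_core hu hxpos
        calc L^2 = L^2 * 1 := (mul_one _).symm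
          _ ≤ L^2 * Real.exp ((-t-L)/4) := mul_le_mul_of_nonneg_left h1 (sq_nonneg L)
          _ = Real.exp (-t/4) * (L^2 * Real.exp (-L/4)) := by rw [hsplit]; ring
          _ ≤ Real.exp (-t/4) * (256 * (u ^ (-(3:ℝ)/4) + (1-u) ^ (-(3:ℝ)/4))) :=
              mul_le_mul_of_nonneg_left hcore (Real.exp_pos _).le
          _ ≤ Real.exp (-t/4) * lindG u := by
              apply mul_le_mul_of_nonneg_left _ (Real.exp_pos _).le
              unfold lindG; linarith
  · rw [Set.indicator_of_notMem hmem]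
    exact mul_nonneg (Real.exp_pos _).le hG

lemma lind_f_measurable :
    Measurable (fun u : ℝ => Real.log (2*(1 - Real.cos (2*π*u)))) :=
  Real.measurable_log.comp ((measurable_const.sub ((Real.continuous_cos.measurable).comp (measurable_const.mul measurable_id))).const_mul 2)

lemma lind_tail {t : ℝ} (ht : 0 ≤ t) :
    ∫ u in {v : ℝ | t ≤ |Real.log (2*(1 - Real.cos (2*π*v)))|},
        (Real.log (2*(1 - Real.cos (2*π*u))))^2 ∂(volume.restrict (Set.Icc (0:ℝ) 1))
      ≤ (∫ u in Set.Icc (0:ℝ) 1, lindG u) * Real.exp (-t/4) := by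
  have hS : MeasurableSet {v : ℝ | t ≤ |Real.log (2*(1 - Real.cos (2*π*v)))|} :=
    measurableSet_le measurable_const lind_f_measurable.abs
  rw [← integral_indicator hS]
  have hmono : ∀ᵐ u ∂(volume.restrict (Set.Icc (0:ℝ) 1)),
      Set.indicator {v : ℝ | t ≤ |Real.log (2*(1 - Real.cos (2*π*v)))|}
        (fun v => (Real.log (2*(1 - Real.cos (2*π*v))))^2) u ≤ Real.exp (-t/4) * lindG u :=
    ae_restrict_of_forall_mem measurableSet_Icc (fun u hu => lind_ptwise ht hu)
  have hint : Integrable (fun u => Real.exp (-t/4) * lindG u)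
      (volume.restrict (Set.Icc (0:ℝ) 1)) := lindG_integrable.const_mul _
  have h0 : 0 ≤ᵐ[volume.restrict (Set.Icc (0:ℝ) 1)]
      Set.indicator {v : ℝ | t ≤ |Real.log (2*(1 - Real.cos (2*π*v)))|}
        (fun v => (Real.log (2*(1 - Real.cos (2*π*v))))^2) :=
    Filter.Eventually.of_forall (fun u => Set.indicator_nonneg (fun v _ => sq_nonneg _) u)
  calc _ ≤ ∫ u in Set.Icc (0:ℝ) 1, Real.exp (-t/4) * lindG u :=
        integral_mono_of_nonneg h0 hint hmono
    _ = Real.exp (-t/4) * ∫ u in Set.Icc (0:ℝ) 1, lindG u := integral_const_mul _ _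
    _ = _ := mul_comm _ _

lemma lind_transfer {Ω : Type*} [MeasurableSpace Ω] (μ : Measure Ω) (Yk : Ω → ℝ)
    (hY : Measurable Yk)
    (hd : Measure.map Yk μ = Measure.map (fun u : ℝ => Real.log (2*(1 - Real.cos (2*π*u))))
      (volume.restrict (Set.Icc (0:ℝ) 1))) (t : ℝ) :
    ∫ ω in {ω | t ≤ |Yk ω|}, (Yk ω)^2 ∂μ
      = ∫ u in {v : ℝ | t ≤ |Real.log (2*(1 - Real.cos (2*π*v)))|},
          (Real.log (2*(1 - Real.cos (2*π*u))))^2 ∂(volume.restrict (Set.Icc (0:ℝ) 1)) := by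
  have hA : MeasurableSet {x : ℝ | t ≤ |x|} := measurableSet_le measurable_const measurable_abs
  have h1 := setIntegral_map (μ := μ) (g := Yk) (f := fun x : ℝ => x^2) hA
    (measurable_id.pow_const 2).aestronglyMeasurable hY.aemeasurable
  have h2 := setIntegral_map (μ := volume.restrict (Set.Icc (0:ℝ) 1))
    (g := fun u : ℝ => Real.log (2*(1 - Real.cos (2*π*u)))) (f := fun x : ℝ => x^2) hA
    (measurable_id.pow_const 2).aestronglyMeasurable lind_f_measurable.aemeasurable
  rw [hd] at h1
  exact h1.symm.trans h2

end LindAux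

theorem lindeberg_condition_of_exponent_condition
    {Ω : Type*} [MeasurableSpace Ω] (μ : Measure Ω) [IsProbabilityMeasure μ]
    (n : ℕ → ℕ) (hn : ∀ k, 0 < n k)
    (s : ℕ → ℝ) (hs : ∀ N, s N = Real.sqrt (∑ k ∈ Finset.Icc 1 N, (n k : ℝ)^2))
    (hcond : ∀ ε : ℝ, 0 < ε → Tendsto (fun N : ℕ =>
        ∑ k ∈ Finset.Icc 1 N, Real.exp (-ε * s N / (n k : ℝ))) atTop (nhds 0))
    (Y : ℕ → Ω → ℝ) (hmeas : ∀ k, Measurable (Y k))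
    (hindep : ProbabilityTheory.iIndepFun Y μ)
    (hdist : ∀ k, Measure.map (Y k) μ =
        Measure.map (fun u : ℝ => Real.log (2*(1 - Real.cos (2*π*u))))
          (volume.restrict (Set.Icc (0:ℝ) 1))) :
    ∀ ε : ℝ, 0 < ε → Tendsto (fun N : ℕ =>
        (1/(s N)^2) * ∑ k ∈ Finset.Icc 1 N, (n k : ℝ)^2 *
          ∫ ω in {ω | ε * s N / (n k : ℝ) ≤ |Y k ω|}, (Y k ω)^2 ∂μ)
      atTop (nhds 0) := by
  intro ε hε
  set C : ℝ := ∫ u in Set.Icc (0:ℝ) 1, lindG u with hC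
  have hC0 : 0 ≤ C := setIntegral_nonneg measurableSet_Icc (fun u hu => lindG_nonneg hu)
  apply squeeze_zero (g := fun N : ℕ =>
    C * ∑ k ∈ Finset.Icc 1 N, Real.exp (-(ε/4) * s N / (n k : ℝ)))
  · intro N
    apply mul_nonneg (by positivity)
    exact Finset.sum_nonneg fun k _ =>
      mul_nonneg (by positivity) (integral_nonneg fun ω => sq_nonneg _)
  · intro N
    have hsN : 0 ≤ s N := by rw [hs N]; exact Real.sqrt_nonneg _
    have hs2 : (s N)^2 = ∑ k ∈ Finset.Icc 1 N, (n k : ℝ)^2 := by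
      rw [hs N, Real.sq_sqrt]; positivity
    rw [Finset.mul_sum, Finset.mul_sum]
    apply Finset.sum_le_sum
    intro k hk
    have hnk : (0:ℝ) < n k := by exact_mod_cast hn k
    have hterm : (n k : ℝ)^2 ≤ (s N)^2 := by
      rw [hs2]
      exact Finset.single_le_sum (f := fun k => (n k : ℝ)^2) (fun i _ => by positivity) hk
    have hspos : (0:ℝ) < (s N)^2 := lt_of_lt_of_le (by positivity) hterm
    have ht0 : 0 ≤ ε * s N / (n k : ℝ) := by positivity
    have hI := lind_transfer μ (Y k) (hmeas k) (hdist k) (ε * s N / (n k : ℝ))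
    have htail := lind_tail (t := ε * s N / (n k : ℝ)) ht0
    have hexp_eq : Real.exp (-(ε * s N / (n k : ℝ))/4)
        = Real.exp (-(ε/4) * s N / (n k : ℝ)) := by congr 1; ring
    rw [hexp_eq] at htail
    rw [hI]
    have hIpos : 0 ≤ ∫ u in {v : ℝ | ε * s N / (n k : ℝ) ≤ |Real.log (2*(1 - Real.cos (2*π*v)))|},
        (Real.log (2*(1 - Real.cos (2*π*u))))^2 ∂(volume.restrict (Set.Icc (0:ℝ) 1)) :=
      integral_nonneg fun u => sq_nonneg _
    have key : (n k : ℝ)^2 * (∫ u in {v : ℝ | ε * s N / (n k : ℝ) ≤ |Real.log (2*(1 - Real.cos (2*π*v)))|},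
          (Real.log (2*(1 - Real.cos (2*π*u))))^2 ∂(volume.restrict (Set.Icc (0:ℝ) 1)))
        ≤ (s N)^2 * (C * Real.exp (-(ε/4) * s N / (n k : ℝ))) := by
      calc _ ≤ (n k : ℝ)^2 * (C * Real.exp (-(ε/4) * s N / (n k : ℝ))) :=
            mul_le_mul_of_nonneg_left htail (by positivity)
        _ ≤ _ := mul_le_mul_of_nonneg_right hterm
            (mul_nonneg hC0 (Real.exp_pos _).le)
    have hfin : 1/(s N)^2 * ((s N)^2 * (C * Real.exp (-(ε/4) * s N / (n k : ℝ))))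
        = C * Real.exp (-(ε/4) * s N / (n k : ℝ)) := by
      rw [one_div, ← mul_assoc, inv_mul_cancel₀ hspos.ne', one_mul]
    calc 1/(s N)^2 * ((n k : ℝ)^2 * _) ≤ 1/(s N)^2 * ((s N)^2 * (C * Real.exp (-(ε/4) * s N / (n k : ℝ)))) :=
          mul_le_mul_of_nonneg_left key (by positivity)
      _ = _ := hfin
  · have := (hcond (ε/4) (by positivity)).const_mul C
    simpa using this
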